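/- For every d ≥ 1 there exists a finite point set S (of size Θ(d)) such that G¹(S) is connected, but some valid Yao edge selection makes Y₂[G^d(S)] disconnected, where Y₂ uses two half-plane cones per point. -/

import Mathlib

/-- Euclidean distance between two points of the plane `ℝ × ℝ`. -/
noncomputable def dE (p q : ℝ × ℝ) : ℝ := Real.sqrt ((p.1 - q.1)^2 + (p.2 - q.2)^2)

lemma dE_comm (p q : ℝ × ℝ) : dE p q = dE q p := by
  unfold dE
  rw [show (p.1 - q.1)^2 = (q.1 - p.1)^2 by ring, show (p.2 - q.2)^2 = (q.2 - p.2)^2 by ring]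

/-- The `d`-radius disk graph on a finite point set `S`: two distinct points are
adjacent iff their Euclidean distance is at most `d`. -/
noncomputable def diskGraph (S : Finset (ℝ × ℝ)) (d : ℝ) :
    SimpleGraph {p : ℝ × ℝ // p ∈ S} where
  Adj p q := p ≠ q ∧ dE p.1 q.1 ≤ d
  symm := ⟨by
    rintro p q ⟨h1, h2⟩
    exact ⟨h1.symm, by rwa [dE_comm]⟩⟩
  loopless := ⟨fun p h => h.1 rfl⟩

/-- The two half-open half-plane cones at `p`, delimited by the rays at angles
`0°` and `180°`; cone `0` is the upper half-plane including the `+x` ray, cone `1`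
is the lower half-plane including the `-x` ray. -/
def inCone2 : Fin 2 → ℝ × ℝ → ℝ × ℝ → Prop
  | 0, p, q => 0 < q.2 - p.2 ∨ (q.2 = p.2 ∧ p.1 < q.1)
  | 1, p, q => q.2 - p.2 < 0 ∨ (q.2 = p.2 ∧ q.1 < p.1)

/-- A valid Yao edge selection for `Y₂[G^d(S)]`: in each nonempty half-plane cone
of each point of `S`, a closest point of `S` within distance `d` is selected. -/
structure YaoSel2 (S : Finset (ℝ × ℝ)) (d : ℝ) where
  sel : ℝ × ℝ → Fin 2 → Option (ℝ × ℝ)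
  sel_mem : ∀ p i q, sel p i = some q →
    p ∈ S ∧ q ∈ S ∧ inCone2 i p q ∧ dE p q ≤ d
  sel_shortest : ∀ p i q, sel p i = some q →
    ∀ r ∈ S, inCone2 i p r → dE p r ≤ d → dE p q ≤ dE p r
  sel_nonempty : ∀ p ∈ S, ∀ (i : Fin 2), ∀ q ∈ S, inCone2 i p q → dE p q ≤ d →
    (sel p i).isSome

/-- The undirected Yao graph `Y₂[G^d(S)]` induced by a selection `Y`. -/
noncomputable def yaoGraph2 (S : Finset (ℝ × ℝ)) (d : ℝ) (Y : YaoSel2 S d) :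
    SimpleGraph {p : ℝ × ℝ // p ∈ S} where
  Adj p q := p ≠ q ∧
    ((∃ i, Y.sel p.1 i = some q.1) ∨ (∃ i, Y.sel q.1 i = some p.1))
  symm := ⟨by rintro p q ⟨h1, h2⟩; exact ⟨h1.symm, h2.symm⟩⟩
  loopless := ⟨fun p h => h.1 rfl⟩

namespace Y2aux

/-- left chain point: `(-j/2, j/(4N))`. -/
noncomputable def ptA (N j : ℕ) : ℝ × ℝ := (-(j:ℝ)/2, (j:ℝ)/(4*(N:ℝ)))
/-- right chain point: `(j/2, 1 - j/(4N))`. -/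
noncomputable def ptB (N j : ℕ) : ℝ × ℝ := ((j:ℝ)/2, 1 - (j:ℝ)/(4*(N:ℝ)))

noncomputable def AImg (N : ℕ) : Finset (ℝ × ℝ) := (Finset.range (N+1)).image (ptA N)
noncomputable def BImg (N : ℕ) : Finset (ℝ × ℝ) := (Finset.range (N+1)).image (ptB N)
noncomputable def SS (N : ℕ) : Finset (ℝ × ℝ) := AImg N ∪ BImg N

/-- the minimal inter-point distance. -/
noncomputable def sN (N : ℕ) : ℝ := Real.sqrt (1/4 + (1/(4*(N:ℝ)))^2)

noncomputable def selA (N j : ℕ) (i : Fin 2) : Option (ℝ × ℝ) :=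
  if i = 0 then (if j < N then some (ptA N (j+1)) else none)
  else (if j = 0 then none else some (ptA N (j-1)))

noncomputable def selB (N j : ℕ) (i : Fin 2) : Option (ℝ × ℝ) :=
  if i = 0 then (if j = 0 then none else some (ptB N (j-1)))
  else (if j < N then some (ptB N (j+1)) else none)

noncomputable def mySel (N : ℕ) (z : ℝ × ℝ) : Fin 2 → Option (ℝ × ℝ) :=
  if z ∈ AImg N then selA N ⌊-2*z.1⌋₊
  else if z ∈ BImg N then selB N ⌊2*z.1⌋₊
  else fun _ => none

variable {N j k : ℕ}

lemma injA (h : ptA N j = ptA N k) : j = k := by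
  have h1 := congrArg Prod.fst h
  simp only [ptA] at h1
  have : (j:ℝ) = k := by linarith
  exact_mod_cast this

lemma injB (h : ptB N j = ptB N k) : j = k := by
  have h1 := congrArg Prod.fst h
  simp only [ptB] at h1
  have : (j:ℝ) = k := by linarith
  exact_mod_cast this

lemma AneB : ptA N j ≠ ptB N k := by
  intro h
  have h1 := congrArg Prod.fst h
  have h2 := congrArg Prod.snd h
  simp only [ptA, ptB] at h1 h2
  have hj : (j:ℝ) = 0 := by
    nlinarith [(Nat.cast_nonneg j : (0:ℝ) ≤ j), (Nat.cast_nonneg k : (0:ℝ) ≤ k)]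
  have hk : (k:ℝ) = 0 := by
    nlinarith [(Nat.cast_nonneg j : (0:ℝ) ≤ j), (Nat.cast_nonneg k : (0:ℝ) ≤ k)]
  rw [hj, hk] at h2
  norm_num at h2

lemma memA (hj : j ≤ N) : ptA N j ∈ SS N := by
  simp only [SS, AImg, Finset.mem_union, Finset.mem_image, Finset.mem_range]
  exact Or.inl ⟨j, by omega, rfl⟩

lemma memB (hj : j ≤ N) : ptB N j ∈ SS N := by
  simp only [SS, BImg, Finset.mem_union, Finset.mem_image, Finset.mem_range]
  exact Or.inr ⟨j, by omega, rfl⟩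

lemma mem_iff {u : ℝ × ℝ} : u ∈ SS N ↔ ∃ j, j ≤ N ∧ (u = ptA N j ∨ u = ptB N j) := by
  simp only [SS, AImg, BImg, Finset.mem_union, Finset.mem_image, Finset.mem_range]
  constructor
  · rintro (⟨j, hj, rfl⟩ | ⟨j, hj, rfl⟩)
    exacts [⟨j, by omega, Or.inl rfl⟩, ⟨j, by omega, Or.inr rfl⟩]
  · rintro ⟨j, hj, (rfl | rfl)⟩
    exacts [Or.inl ⟨j, by omega, rfl⟩, Or.inr ⟨j, by omega, rfl⟩]


lemma sN_nonneg : 0 ≤ sN N := Real.sqrt_nonneg _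

lemma sN_le_one : sN N ≤ 1 := by
  rw [sN, Real.sqrt_le_one]
  rcases Nat.eq_zero_or_pos N with h | h
  · subst h; norm_num
  · have : (1:ℝ) ≤ (N:ℝ) := by exact_mod_cast h
    have : (1/(4*(N:ℝ)))^2 ≤ (1/4)^2 := by
      apply pow_le_pow_left₀ (by positivity)
      rw [div_le_div_iff₀ (by positivity) (by norm_num)]
      nlinarith
    nlinarith

lemma dAA (hN : 0 < N) : dE (ptA N j) (ptA N k) = |(j:ℝ) - (k:ℝ)| * sN N := by
  · have hN : (4*(N:ℝ)) ≠ 0 := by positivity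
    simp only [dE, ptA, sN]
    rw [show (-(↑j:ℝ) / 2 - -(↑k:ℝ) / 2) ^ 2 + ((↑j:ℝ) / (4 * ↑N) - ↑k / (4 * ↑N)) ^ 2
        = ((j:ℝ)-k)^2 * (1/4 + (1/(4*(N:ℝ)))^2) by field_simp; ring]
    rw [Real.sqrt_mul (sq_nonneg _), Real.sqrt_sq_eq_abs]

lemma dBB (hN : 0 < N) : dE (ptB N j) (ptB N k) = |(j:ℝ) - (k:ℝ)| * sN N := by
  · have hN : (4*(N:ℝ)) ≠ 0 := by positivity
    simp only [dE, ptB, sN]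
    rw [show ((↑j:ℝ) / 2 - (↑k:ℝ) / 2) ^ 2 + ((1 - (↑j:ℝ) / (4 * ↑N)) - (1 - ↑k / (4 * ↑N))) ^ 2
        = ((j:ℝ)-k)^2 * (1/4 + (1/(4*(N:ℝ)))^2) by field_simp; ring]
    rw [Real.sqrt_mul (sq_nonneg _), Real.sqrt_sq_eq_abs]

lemma dConsA (hN : 0 < N) : dE (ptA N j) (ptA N (j+1)) = sN N := by
  rw [dAA hN]; push_cast; rw [show (↑j:ℝ) - (↑j+1) = -1 by ring]; norm_num

lemma dConsB (hN : 0 < N) : dE (ptB N j) (ptB N (j+1)) = sN N := by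
  rw [dBB hN]; push_cast; rw [show (↑j:ℝ) - (↑j+1) = -1 by ring]; norm_num

lemma crossGe1 (hN : 3 ≤ N) : 1 ≤ dE (ptA N j) (ptB N k) := by
  have hN3 : (3:ℝ) ≤ (N:ℝ) := by exact_mod_cast hN
  have hNpos : (0:ℝ) < 4*(N:ℝ) := by linarith
  simp only [dE, ptA, ptB]
  rw [Real.one_le_sqrt]
  set m : ℝ := (j:ℝ) + (k:ℝ) with hm
  have hm0 : 0 ≤ m := by positivity
  rw [show (-(↑j:ℝ) / 2 - ↑k / 2)^2 = m^2/4 by rw [hm]; ring,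
      show ((↑j:ℝ) / (4 * ↑N) - (1 - ↑k / (4 * ↑N))) = m/(4*N) - 1 by rw [hm]; ring]
  rcases eq_or_lt_of_le hm0 with h0 | h1
  · rw [← h0]; norm_num
  · have hm1 : 1 ≤ m := by
      have hjk : 1 ≤ j + k := by
        by_contra hc
        push_neg at hc
        have hj0 : j = 0 := by omega
        have hk0 : k = 0 := by omega
        rw [hj0, hk0] at hm
        norm_num at hm
        linarith
      have h2 : ((1:ℕ):ℝ) ≤ ((j+k:ℕ):ℝ) := by exact_mod_cast hjk
      push_cast at h2
      linarith [h2, hm.ge]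
    have ht : m/(4*(N:ℝ)) ≤ m/12 := by
      rw [div_le_div_iff₀ hNpos (by norm_num)]
      nlinarith
    nlinarith [ht, sq_nonneg (m/(4*(N:ℝ))), mul_le_mul_of_nonneg_left hm1 hm0]

lemma crossFarA : ((N:ℝ)+(k:ℝ))/2 ≤ dE (ptA N N) (ptB N k) := by
  simp only [dE, ptA, ptB]
  calc ((N:ℝ)+k)/2 = |(-(↑N:ℝ) / 2 - ↑k / 2)| := by
        rw [abs_of_nonpos (by
          have h1 : (0:ℝ) ≤ (N:ℝ)/2 + (k:ℝ)/2 := by positivity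
          linarith)]
        ring
    _ = Real.sqrt ((-(↑N:ℝ) / 2 - ↑k / 2)^2) := (Real.sqrt_sq_eq_abs _).symm
    _ ≤ _ := Real.sqrt_le_sqrt (by nlinarith [sq_nonneg ((↑N:ℝ) / (4 * ↑N) - (1 - ↑k / (4 * ↑N)))])


lemma minDist (hN : 3 ≤ N) {u v : ℝ × ℝ} (hu : u ∈ SS N) (hv : v ∈ SS N) (huv : u ≠ v) :
    sN N ≤ dE u v := by
  have hN0 : 0 < N := by omega
  obtain ⟨a, ha, (rfl|rfl)⟩ := mem_iff.mp hu <;>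
    obtain ⟨b, hb, (rfl|rfl)⟩ := mem_iff.mp hv
  · rw [dAA hN0]
    have hab : a ≠ b := fun h => huv (by rw [h])
    have h1 : (1:ℝ) ≤ |(a:ℝ) - b| := by
      rcases lt_or_gt_of_ne hab with h | h
      · rw [abs_sub_comm, abs_of_nonneg (by
          have : (a:ℝ) ≤ b := by exact_mod_cast h.le
          linarith)]
        have : (a:ℝ) + 1 ≤ b := by exact_mod_cast h
        linarith
      · rw [abs_of_nonneg (by
          have : (b:ℝ) ≤ a := by exact_mod_cast h.le
          linarith)]
        have : (b:ℝ) + 1 ≤ a := by exact_mod_cast h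
        linarith
    nlinarith [sN_nonneg (N := N)]
  · exact le_trans (sN_le_one) (crossGe1 hN)
  · rw [dE_comm]; exact le_trans (sN_le_one) (crossGe1 hN)
  · rw [dBB hN0]
    have hab : a ≠ b := fun h => huv (by rw [h])
    have h1 : (1:ℝ) ≤ |(a:ℝ) - b| := by
      rcases lt_or_gt_of_ne hab with h | h
      · rw [abs_sub_comm, abs_of_nonneg (by
          have : (a:ℝ) ≤ b := by exact_mod_cast h.le
          linarith)]
        have : (a:ℝ) + 1 ≤ b := by exact_mod_cast h
        linarith
      · rw [abs_of_nonneg (by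
          have : (b:ℝ) ≤ a := by exact_mod_cast h.le
          linarith)]
        have : (b:ℝ) + 1 ≤ a := by exact_mod_cast h
        linarith
    nlinarith [sN_nonneg (N := N)]

lemma not_inCone_self (i : Fin 2) (p : ℝ × ℝ) : ¬ inCone2 i p p := by
  fin_cases i <;> simp [inCone2]

lemma coneA0succ (hN : 0 < N) : inCone2 0 (ptA N j) (ptA N (j+1)) := by
  left
  simp only [ptA]
  have : (0:ℝ) < 4*(N:ℝ) := by positivity
  rw [div_sub_div_same, div_pos_iff]
  left
  constructor
  · push_cast; linarith
  · exact this

lemma coneA1pred (hN : 0 < N) (hj : 1 ≤ j) : inCone2 1 (ptA N j) (ptA N (j-1)) := by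
  left
  simp only [ptA]
  have h4 : (0:ℝ) < 4*(N:ℝ)  := by positivity
  rw [div_sub_div_same, div_neg_iff]
  right
  constructor
  · have : ((j-1:ℕ):ℝ) = (j:ℝ) - 1 := by
      push_cast [Nat.cast_sub hj]; ring
    rw [this]; linarith
  · exact h4

lemma coneB1succ (hN : 0 < N) : inCone2 1 (ptB N j) (ptB N (j+1)) := by
  left
  simp only [ptB]
  have h4 : (0:ℝ) < 4*(N:ℝ) := by positivity
  rw [show (1 - ((j+1:ℕ):ℝ) / (4 * ↑N) - (1 - (j:ℝ) / (4 * ↑N))) = -(1/(4*(N:ℝ))) by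
    push_cast; field_simp; ring]
  simp only [neg_neg, Left.neg_neg_iff]
  positivity

lemma coneB0pred (hN : 0 < N) (hj : 1 ≤ j) : inCone2 0 (ptB N j) (ptB N (j-1)) := by
  left
  simp only [ptB]
  have h4 : (0:ℝ) < 4*(N:ℝ) := by positivity
  have h : ((j-1:ℕ):ℝ) = (j:ℝ) - 1 := by push_cast [Nat.cast_sub hj]; ring
  rw [h]
  rw [show (1 - ((j:ℝ)-1) / (4 * ↑N) - (1 - ↑j / (4 * ↑N))) = 1/(4*(N:ℝ)) by field_simp; ring]
  positivity


lemma fin2 (i : Fin 2) : i = 0 ∨ i = 1 := by omega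

lemma memAImg (hj : j ≤ N) : ptA N j ∈ AImg N := by
  simp only [AImg, Finset.mem_image, Finset.mem_range]
  exact ⟨j, by omega, rfl⟩

lemma memBImg (hj : j ≤ N) : ptB N j ∈ BImg N := by
  simp only [BImg, Finset.mem_image, Finset.mem_range]
  exact ⟨j, by omega, rfl⟩

lemma B_not_in_AImg : ptB N j ∉ AImg N := by
  simp only [AImg, Finset.mem_image, Finset.mem_range]
  rintro ⟨k, -, hk⟩
  exact AneB hk

lemma A_not_in_BImg : ptA N j ∉ BImg N := by
  simp only [BImg, Finset.mem_image, Finset.mem_range]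
  rintro ⟨k, -, hk⟩
  exact AneB hk.symm

lemma decodeA : ⌊-2*(ptA N j).1⌋₊ = j := by
  show ⌊-2 * (-(j:ℝ)/2)⌋₊ = j
  rw [show -2 * (-(j:ℝ)/2) = (j:ℝ) by ring]
  exact Nat.floor_natCast j

lemma decodeB : ⌊2*(ptB N j).1⌋₊ = j := by
  show ⌊2 * ((j:ℝ)/2)⌋₊ = j
  rw [show 2 * ((j:ℝ)/2) = (j:ℝ) by ring]
  exact Nat.floor_natCast j

lemma mySel_A (hj : j ≤ N) : mySel N (ptA N j) = selA N j := by
  unfold mySel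
  rw [if_pos (memAImg hj), decodeA]

lemma mySel_B (hj : j ≤ N) : mySel N (ptB N j) = selB N j := by
  unfold mySel
  rw [if_neg B_not_in_AImg, if_pos (memBImg hj), decodeB]

lemma selA_eq {i : Fin 2} {w : ℝ × ℝ} (h : selA N j i = some w) :
    (j < N ∧ w = ptA N (j+1) ∧ i = 0) ∨ (1 ≤ j ∧ w = ptA N (j-1) ∧ i = 1) := by
  rcases fin2 i with rfl | rfl
  · rw [selA, if_pos rfl] at h
    split_ifs at h with hc
    exact Or.inl ⟨hc, (Option.some.inj h).symm, rfl⟩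
  · rw [selA, if_neg (by decide)] at h
    split_ifs at h with hc
    exact Or.inr ⟨by omega, (Option.some.inj h).symm, rfl⟩

lemma selB_eq {i : Fin 2} {w : ℝ × ℝ} (h : selB N j i = some w) :
    (1 ≤ j ∧ w = ptB N (j-1) ∧ i = 0) ∨ (j < N ∧ w = ptB N (j+1) ∧ i = 1) := by
  rcases fin2 i with rfl | rfl
  · rw [selB, if_pos rfl] at h
    split_ifs at h with hc
    exact Or.inl ⟨by omega, (Option.some.inj h).symm, rfl⟩
  · rw [selB, if_neg (by decide)] at h
    split_ifs at h with hc
    exact Or.inr ⟨hc, (Option.some.inj h).symm, rfl⟩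

lemma selSide {z w : ℝ × ℝ} {i : Fin 2} (h : mySel N z i = some w) :
    (z ∈ AImg N ∧ w ∈ AImg N) ∨ (z ∈ BImg N ∧ w ∈ BImg N) := by
  unfold mySel at h
  split_ifs at h with h1 h2
  · left
    refine ⟨h1, ?_⟩
    obtain ⟨k, hk, rfl⟩ := Finset.mem_image.mp h1
    rw [Finset.mem_range] at hk
    rw [decodeA] at h
    rcases selA_eq h with ⟨hlt, rfl, -⟩ | ⟨hge, rfl, -⟩
    · exact memAImg (by omega)
    · exact memAImg (by omega)
  · right
    refine ⟨h2, ?_⟩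
    obtain ⟨k, hk, rfl⟩ := Finset.mem_image.mp h2
    rw [Finset.mem_range] at hk
    rw [decodeB] at h
    rcases selB_eq h with ⟨hge, rfl, -⟩ | ⟨hlt, rfl, -⟩
    · exact memBImg (by omega)
    · exact memBImg (by omega)


lemma crossFarB : ((N:ℝ)+(k:ℝ))/2 ≤ dE (ptB N N) (ptA N k) := by
  rw [dE_comm]
  simp only [dE, ptA, ptB]
  calc ((N:ℝ)+k)/2 = |(-(↑k:ℝ) / 2 - ↑N / 2)| := by
        rw [abs_of_nonpos (by
          have h1 : (0:ℝ) ≤ (N:ℝ)/2 + (k:ℝ)/2 := by positivity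
          linarith)]
        ring
    _ = Real.sqrt ((-(↑k:ℝ) / 2 - ↑N / 2)^2) := (Real.sqrt_sq_eq_abs _).symm
    _ ≤ _ := Real.sqrt_le_sqrt (by nlinarith [sq_nonneg ((↑k:ℝ) / (4 * ↑N) - (1 - ↑N / (4 * ↑N)))])

lemma coneA_top (hN : 3 ≤ N) {dd : ℝ} (hdd : 2*dd < (N:ℝ)) {q : ℝ × ℝ}
    (hq : q ∈ SS N) (hc : inCone2 0 (ptA N N) q) (hle : dE (ptA N N) q ≤ dd) : False := by
  have h4 : (0:ℝ) < 4*(N:ℝ) := by positivity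
  have h4' : (4*(N:ℝ)) ≠ 0 := ne_of_gt h4
  obtain ⟨j, hj, (rfl | rfl)⟩ := mem_iff.mp hq
  · rcases hc with hc | ⟨hc, hc2⟩
    · simp only [ptA, div_sub_div_same] at hc
      rcases div_pos_iff.mp hc with ⟨h5, -⟩ | ⟨-, h6⟩
      · have : (N:ℝ) < j := by linarith
        have : N < j := by exact_mod_cast this
        omega
      · linarith
    · simp only [ptA] at hc hc2
      field_simp at hc
      rw [hc] at hc2
      exact lt_irrefl _ hc2
  · have := crossFarA (N := N) (k := j)
    have hj0 : (0:ℝ) ≤ (j:ℝ) := Nat.cast_nonneg j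
    linarith

lemma coneB_bot (hN : 3 ≤ N) {dd : ℝ} (hdd : 2*dd < (N:ℝ)) {q : ℝ × ℝ}
    (hq : q ∈ SS N) (hc : inCone2 1 (ptB N N) q) (hle : dE (ptB N N) q ≤ dd) : False := by
  have h4 : (0:ℝ) < 4*(N:ℝ) := by positivity
  have h4' : (4*(N:ℝ)) ≠ 0 := ne_of_gt h4
  obtain ⟨j, hj, (rfl | rfl)⟩ := mem_iff.mp hq
  · have := crossFarB (N := N) (k := j)
    have hj0 : (0:ℝ) ≤ (j:ℝ) := Nat.cast_nonneg j
    linarith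
  · rcases hc with hc | ⟨hc, hc2⟩
    · simp only [ptB] at hc
      rw [show (1 - (j:ℝ)/(4*(N:ℝ)) - (1 - (N:ℝ)/(4*(N:ℝ)))) = ((N:ℝ)-j)/(4*(N:ℝ)) by ring]
        at hc
      rcases div_neg_iff.mp hc with ⟨-, h6⟩ | ⟨h5, -⟩
      · linarith
      · have : (N:ℝ) < j := by linarith
        have : N < j := by exact_mod_cast this
        omega
    · simp only [ptB] at hc hc2
      field_simp at hc
      have hjN : (j:ℝ) = N := by linarith
      rw [hjN] at hc2
      exact lt_irrefl _ hc2

lemma coneA_bot (hN : 3 ≤ N) {q : ℝ × ℝ} (hq : q ∈ SS N)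
    (hc : inCone2 1 (ptA N 0) q) : False := by
  have h4 : (0:ℝ) < 4*(N:ℝ) := by positivity
  have h4' : (4*(N:ℝ)) ≠ 0 := ne_of_gt h4
  have h14 : (N:ℝ)/(4*(N:ℝ)) = 1/4 := by field_simp
  obtain ⟨j, hj, (rfl | rfl)⟩ := mem_iff.mp hq
  · have hpos : (0:ℝ) ≤ (j:ℝ)/(4*(N:ℝ)) := by positivity
    rcases hc with hc | ⟨hc, hc2⟩
    · simp only [ptA, Nat.cast_zero, zero_div] at hc
      linarith
    · simp only [ptA, Nat.cast_zero, zero_div] at hc hc2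
      field_simp at hc
      rw [hc] at hc2
      norm_num at hc2
  · have hjn : (j:ℝ) ≤ (N:ℝ) := by exact_mod_cast hj
    have hyj : (j:ℝ)/(4*(N:ℝ)) ≤ 1/4 := by rw [← h14]; gcongr
    rcases hc with hc | ⟨hc, hc2⟩
    · simp only [ptA, ptB, Nat.cast_zero, zero_div] at hc
      linarith
    · simp only [ptA, ptB, Nat.cast_zero, zero_div] at hc
      linarith

lemma coneB_top (hN : 3 ≤ N) {q : ℝ × ℝ} (hq : q ∈ SS N)
    (hc : inCone2 0 (ptB N 0) q) : False := by
  have h4 : (0:ℝ) < 4*(N:ℝ) := by positivity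
  have h4' : (4*(N:ℝ)) ≠ 0 := ne_of_gt h4
  have h14 : (N:ℝ)/(4*(N:ℝ)) = 1/4 := by field_simp
  obtain ⟨j, hj, (rfl | rfl)⟩ := mem_iff.mp hq
  · have hjn : (j:ℝ) ≤ (N:ℝ) := by exact_mod_cast hj
    have hyj : (j:ℝ)/(4*(N:ℝ)) ≤ 1/4 := by rw [← h14]; gcongr
    rcases hc with hc | ⟨hc, hc2⟩
    · simp only [ptA, ptB, Nat.cast_zero, zero_div, sub_zero] at hc
      linarith
    · simp only [ptA, ptB, Nat.cast_zero, zero_div, sub_zero] at hc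
      linarith
  · have hpos : (0:ℝ) ≤ (j:ℝ)/(4*(N:ℝ)) := by positivity
    rcases hc with hc | ⟨hc, hc2⟩
    · simp only [ptB, Nat.cast_zero, zero_div, sub_zero] at hc
      linarith
    · simp only [ptB, Nat.cast_zero, zero_div, sub_zero] at hc hc2
      have hj0 : (j:ℝ) = 0 := by
        have : (j:ℝ)/(4*(N:ℝ)) = 0 := by linarith
        field_simp at this
        exact_mod_cast this
      rw [hj0] at hc2
      norm_num at hc2


lemma memSS_A {z : ℝ × ℝ} (h : z ∈ AImg N) : z ∈ SS N := Finset.mem_union_left _ h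
lemma memSS_B {z : ℝ × ℝ} (h : z ∈ BImg N) : z ∈ SS N := Finset.mem_union_right _ h

lemma notA_of_B {z : ℝ × ℝ} (h : z ∈ BImg N) : z ∉ AImg N := by
  obtain ⟨k, -, rfl⟩ := Finset.mem_image.mp h
  exact B_not_in_AImg

lemma dPQ : dE (ptA N 0) (ptB N 0) ≤ 1 := by
  simp only [dE, ptA, ptB, Nat.cast_zero, zero_div, neg_zero, sub_zero]
  rw [show ((0:ℝ))^2 + (0 - 1)^2 = 1 by norm_num, Real.sqrt_one]

lemma mySel_spec (hN : 3 ≤ N) {z w : ℝ × ℝ} {i : Fin 2} (h : mySel N z i = some w) :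
    z ∈ SS N ∧ w ∈ SS N ∧ inCone2 i z w ∧ dE z w = sN N := by
  have hN0 : 0 < N := by omega
  unfold mySel at h
  split_ifs at h with h1 h2
  · obtain ⟨k, hk, rfl⟩ := Finset.mem_image.mp h1
    rw [Finset.mem_range] at hk
    rw [decodeA] at h
    rcases selA_eq h with ⟨hlt, rfl, rfl⟩ | ⟨hge, rfl, rfl⟩
    · exact ⟨memA (by omega), memA (by omega), coneA0succ hN0, dConsA hN0⟩
    · refine ⟨memA (by omega), memA (by omega), coneA1pred hN0 hge, ?_⟩
      have h' := dConsA (N := N) (j := k-1) hN0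
      rw [show k-1+1 = k by omega] at h'
      rw [dE_comm]
      exact h'
  · obtain ⟨k, hk, rfl⟩ := Finset.mem_image.mp h2
    rw [Finset.mem_range] at hk
    rw [decodeB] at h
    rcases selB_eq h with ⟨hge, rfl, rfl⟩ | ⟨hlt, rfl, rfl⟩
    · refine ⟨memB (by omega), memB (by omega), coneB0pred hN0 hge, ?_⟩
      have h' := dConsB (N := N) (j := k-1) hN0
      rw [show k-1+1 = k by omega] at h'
      rw [dE_comm]
      exact h'
    · exact ⟨memB (by omega), memB (by omega), coneB1succ hN0, dConsB hN0⟩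

end Y2aux


/-- For every `d ≥ 1` there is a finite point set `S` with `G¹(S)` connected such
that some valid Yao edge selection makes `Y₂[G^d(S)]` disconnected. -/
theorem y2_disconnected (d : ℝ) (hd : 1 ≤ d) :
    ∃ S : Finset (ℝ × ℝ), (diskGraph S 1).Connected ∧
      ∃ Y : YaoSel2 S d, ¬ (yaoGraph2 S d Y).Connected := by
  classical
  open Y2aux in
  set N : ℕ := ⌈2*d⌉₊ + 1 with hNdef
  have hN : 3 ≤ N := by
    have h2 : (2:ℕ) = ⌈(2:ℝ)⌉₊ := by simp
    have : ⌈(2:ℝ)⌉₊ ≤ ⌈2*d⌉₊ := Nat.ceil_le_ceil (by linarith)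
    omega
  have hN0 : 0 < N := by omega
  have hdd : 2*d < (N:ℝ) := by
    have h1 : 2*d ≤ (⌈2*d⌉₊:ℝ) := Nat.le_ceil _
    have h2 : ((⌈2*d⌉₊:ℕ):ℝ) < ((N:ℕ):ℝ) := by
      have : ⌈2*d⌉₊ < N := by omega
      exact_mod_cast this
    linarith
  -- the Yao selection
  have selmem : ∀ p i q, mySel N p i = some q →
      p ∈ SS N ∧ q ∈ SS N ∧ inCone2 i p q ∧ dE p q ≤ d := by
    intro p i q h
    obtain ⟨h1, h2, h3, h4⟩ := mySel_spec hN h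
    exact ⟨h1, h2, h3, by rw [h4]; exact le_trans sN_le_one hd⟩
  have selshort : ∀ p i q, mySel N p i = some q →
      ∀ r ∈ SS N, inCone2 i p r → dE p r ≤ d → dE p q ≤ dE p r := by
    intro p i q h r hr hcone hrd
    obtain ⟨h1, -, -, h4⟩ := mySel_spec hN h
    rw [h4]
    refine minDist hN h1 hr ?_
    intro hpr
    rw [hpr] at hcone
    exact not_inCone_self i r hcone
  have selne : ∀ p ∈ SS N, ∀ (i : Fin 2), ∀ q ∈ SS N, inCone2 i p q → dE p q ≤ d →
      (mySel N p i).isSome := by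
    intro p hp i q hq hcone hdq
    obtain ⟨k, hk, (rfl | rfl)⟩ := mem_iff.mp hp
    · rw [mySel_A hk]
      rcases fin2 i with rfl | rfl
      · rw [selA, if_pos rfl]
        by_cases hkN : k < N
        · rw [if_pos hkN]; rfl
        · exfalso
          have hkN' : k = N := by omega
          rw [hkN'] at hcone hdq
          exact coneA_top hN hdd hq hcone hdq
      · rw [selA, if_neg (by decide)]
        by_cases hk0 : k = 0
        · exfalso
          rw [hk0] at hcone
          exact coneA_bot hN hq hcone
        · rw [if_neg hk0]; rfl
    · rw [mySel_B hk]
      rcases fin2 i with rfl | rfl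
      · rw [selB, if_pos rfl]
        by_cases hk0 : k = 0
        · exfalso
          rw [hk0] at hcone
          exact coneB_top hN hq hcone
        · rw [if_neg hk0]; rfl
      · rw [selB, if_neg (by decide)]
        by_cases hkN : k < N
        · rw [if_pos hkN]; rfl
        · exfalso
          have hkN' : k = N := by omega
          rw [hkN'] at hcone hdq
          exact coneB_bot hN hdd hq hcone hdq
  refine ⟨SS N, ?_, ⟨mySel N, selmem, selshort, selne⟩, ?_⟩
  · -- G¹ connectivity
    set G := diskGraph (SS N) 1 with hG
    have hsle : sN N ≤ 1 := sN_le_one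
    have reachA : ∀ k (hk : k ≤ N),
        G.Reachable ⟨ptA N k, memA hk⟩ ⟨ptA N 0, memA (Nat.zero_le N)⟩ := by
      intro k
      induction k with
      | zero => intro _; exact SimpleGraph.Reachable.refl _
      | succ k ih =>
        intro hk1
        have hadj : G.Adj ⟨ptA N (k+1), memA hk1⟩ ⟨ptA N k, memA (by omega)⟩ := by
          refine And.intro ?_ ?_
          · intro hcontr
            have := injA (congrArg Subtype.val hcontr)
            omega
          · show dE (ptA N (k+1)) (ptA N k) ≤ 1
            rw [dE_comm, dConsA hN0]
            exact hsle
        exact hadj.reachable.trans (ih (by omega))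
    have reachB : ∀ k (hk : k ≤ N),
        G.Reachable ⟨ptB N k, memB hk⟩ ⟨ptB N 0, memB (Nat.zero_le N)⟩ := by
      intro k
      induction k with
      | zero => intro _; exact SimpleGraph.Reachable.refl _
      | succ k ih =>
        intro hk1
        have hadj : G.Adj ⟨ptB N (k+1), memB hk1⟩ ⟨ptB N k, memB (by omega)⟩ := by
          refine And.intro ?_ ?_
          · intro hcontr
            have := injB (congrArg Subtype.val hcontr)
            omega
          · show dE (ptB N (k+1)) (ptB N k) ≤ 1
            rw [dE_comm, dConsB hN0]
            exact hsle
        exact hadj.reachable.trans (ih (by omega))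
    have adjQP : G.Adj ⟨ptB N 0, memB (Nat.zero_le N)⟩ ⟨ptA N 0, memA (Nat.zero_le N)⟩ := by
      refine And.intro ?_ ?_
      · intro hcontr
        exact AneB (congrArg Subtype.val hcontr).symm
      · show dE (ptB N 0) (ptA N 0) ≤ 1
        rw [dE_comm]
        exact dPQ
    have reachP : ∀ u : {p : ℝ × ℝ // p ∈ SS N},
        G.Reachable u ⟨ptA N 0, memA (Nat.zero_le N)⟩ := by
      rintro ⟨u, hu⟩
      obtain ⟨k, hk, (rfl | rfl)⟩ := mem_iff.mp hu
      · exact reachA k hk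
      · exact (reachB k hk).trans adjQP.reachable
    have : Nonempty {p : ℝ × ℝ // p ∈ SS N} := ⟨⟨ptA N 0, memA (Nat.zero_le N)⟩⟩
    exact ⟨fun u v => (reachP u).trans (reachP v).symm⟩
  · -- Yao graph disconnected
    intro hconn
    set Y : YaoSel2 (SS N) d := ⟨mySel N, selmem, selshort, selne⟩ with hY
    have side : ∀ {u v : {p : ℝ × ℝ // p ∈ SS N}}, (yaoGraph2 (SS N) d Y).Adj u v →
        (u.1 ∈ AImg N ↔ v.1 ∈ AImg N) := by
      rintro u v hadj
      obtain ⟨-, (⟨i, hi⟩ | ⟨i, hi⟩)⟩ : u ≠ v ∧ ((∃ i, mySel N u.1 i = some v.1) ∨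
          (∃ i, mySel N v.1 i = some u.1)) := hadj
      · rcases selSide hi with ⟨ha, hb⟩ | ⟨ha, hb⟩
        · simp [ha, hb]
        · simp [notA_of_B ha, notA_of_B hb]
      · rcases selSide hi with ⟨ha, hb⟩ | ⟨ha, hb⟩
        · simp [ha, hb]
        · simp [notA_of_B ha, notA_of_B hb]
    have keep : ∀ {u v : {p : ℝ × ℝ // p ∈ SS N}}, (yaoGraph2 (SS N) d Y).Reachable u v →
        (u.1 ∈ AImg N ↔ v.1 ∈ AImg N) := by
      intro u v h
      obtain ⟨w⟩ := h
      induction w with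
      | nil => exact Iff.rfl
      | cons hadj _ ih => exact (side hadj).trans ih
    have hreach := hconn.preconnected ⟨ptA N 0, memA (Nat.zero_le N)⟩
      ⟨ptB N 0, memB (Nat.zero_le N)⟩
    have := (keep hreach).mp (memAImg (Nat.zero_le N))
    exact B_not_in_AImg this
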